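/- For the Stokeslet G_{ij}(x,y) = (1/4π)[−log|x−y| δ_{ij} + (xᵢ−yᵢ)(xⱼ−yⱼ)/|x−y|²], the single layer Stokes potential with density μ on a smooth closed curve γ satisfies |S_γμ(x) + (1/4π)[log|x| I − R/|x|²] ∫_γ μ ds| → 0 as |x| → ∞, where R is the matrix with entries xᵢxⱼ. -/

import Mathlib

open MeasureTheory Real Filter

noncomputable section

abbrev E2 := EuclideanSpace ℝ (Fin 2)

/-- The 2D Stokeslet
`G_{ij}(x,y) = (1/4π)[-log|x-y| δ_{ij} + (xᵢ-yᵢ)(xⱼ-yⱼ)/|x-y|²]`. -/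
def stokeslet (x y : E2) (i j : Fin 2) : ℝ :=
  (1/(4*π)) * (-(Real.log ‖x - y‖) * (if i = j then 1 else 0)
    + (x i - y i) * (x j - y j) / ‖x - y‖ ^ 2)


lemma abs_coord_le (x : E2) (i : Fin 2) : |x i| ≤ ‖x‖ := by
  rw [EuclideanSpace.norm_eq, ← Real.sqrt_sq_eq_abs]
  apply Real.sqrt_le_sqrt
  calc (x i)^2 = ‖x i‖^2 := by rw [Real.norm_eq_abs, sq_abs]
  _ ≤ ∑ j, ‖x j‖^2 := Finset.single_le_sum (f := fun j => ‖x j‖^2) (fun j _ => sq_nonneg _) (Finset.mem_univ i)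

lemma abs_log_sub_log_le {a b : ℝ} (ha : 0 < a) (hb : 0 < b) :
    |Real.log a - Real.log b| ≤ |a - b| / min a b := by
  have hmin : 0 < min a b := lt_min ha hb
  rw [abs_le]
  constructor
  · have h := Real.log_le_sub_one_of_pos (div_pos hb ha)
    rw [Real.log_div hb.ne' ha.ne'] at h
    have h2 : b / a - 1 = (b - a) / a := by field_simp
    have h3 : (b - a) / a ≤ |a - b| / min a b :=
      div_le_div₀ (abs_nonneg _) (by rw [abs_sub_comm]; exact le_abs_self _) hmin (min_le_left _ _)
    linarith
  · have h := Real.log_le_sub_one_of_pos (div_pos ha hb)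
    rw [Real.log_div ha.ne' hb.ne'] at h
    have h2 : a / b - 1 = (a - b) / b := by field_simp
    have h3 : (a - b) / b ≤ |a - b| / min a b :=
      div_le_div₀ (abs_nonneg _) (le_abs_self _) hmin (min_le_right _ _)
    linarith

set_option maxHeartbeats 1000000 in
lemma kern_bound {M : ℝ} (hM : 0 ≤ M) (x y : E2) (hy : ‖y‖ ≤ M)
    (hx : 2*M + 2 ≤ ‖x‖) (i j : Fin 2) :
    |stokeslet x y i j + (1/(4*π)) * (Real.log ‖x‖ * (if i = j then 1 else 0)
      - x i * x j / ‖x‖^2)| ≤ (1/(4*π)) * (26*M) / ‖x‖ := by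
  set s := ‖x‖ with hs
  set r := ‖x - y‖ with hr
  have hs0 : 0 < s := by linarith
  have hr_ge : s/2 ≤ r := by
    have h1 : s - ‖y‖ ≤ r := by
      have := abs_norm_sub_norm_le x (x - y)
      simp only [sub_sub_cancel] at this
      have := abs_le.mp this
      linarith [this.1]
    linarith
  have hr0 : 0 < r := by linarith
  have hr_le : r ≤ 2*s := by
    have : r ≤ ‖x‖ + ‖y‖ := norm_sub_le _ _
    linarith
  have hsr : |s - r| ≤ M := by
    have h : |s - r| ≤ ‖x - (x - y)‖ := abs_norm_sub_norm_le x (x - y)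
    rw [sub_sub_cancel] at h
    exact h.trans hy
  have hpi : (0:ℝ) < 4*π := by positivity
  -- coordinates
  set a := x i; set b := x j
  have hxy_i : (x - y) i = a - y i := by simp [PiLp.sub_apply, a]
  have hxy_j : (x - y) j = b - y j := by simp [PiLp.sub_apply, b]
  have ha : |a| ≤ s := abs_coord_le x i
  have hb : |b| ≤ s := abs_coord_le x j
  have hyi : |y i| ≤ M := (abs_coord_le y i).trans hy
  have hyj : |y j| ≤ M := (abs_coord_le y j).trans hy
  have hui : |(x - y) i| ≤ r := abs_coord_le (x - y) i
  have huj : |(x - y) j| ≤ r := abs_coord_le (x - y) j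
  -- log part
  have hlog : |Real.log s - Real.log r| ≤ 2*M/s := by
    have h1 := abs_log_sub_log_le hs0 hr0
    have hmin : s/2 ≤ min s r := le_min (by linarith) hr_ge
    have h2 : |s - r| / min s r ≤ M / (s/2) :=
      div_le_div₀ hM hsr (by linarith) hmin
    have h3 : M / (s/2) = 2*M/s := by field_simp
    linarith
  -- rational part
  have hrat : |(x - y) i * (x - y) j / r^2 - a * b / s^2| ≤ 24*M/s := by
    have hr2 : s^2/4 ≤ r^2 := by nlinarith
    have hs2 : (0:ℝ) < s^2 := by positivity
    have hr2p : (0:ℝ) < r^2 := by positivity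
    have hnum1 : |(x - y) i * (x - y) j - a * b| ≤ 3*s*M := by
      have e : (x - y) i * (x - y) j - a * b = (x - y) i * (-(y j)) + (-(y i)) * b := by
        rw [hxy_i, hxy_j]; ring
      rw [e]
      calc |(x - y) i * (-(y j)) + (-(y i)) * b|
          ≤ |(x - y) i * (-(y j))| + |(-(y i)) * b| := abs_add_le _ _
        _ = |(x - y) i| * |y j| + |y i| * |b| := by rw [abs_mul, abs_mul, abs_neg, abs_neg]
        _ ≤ r * M + M * s := by
            apply add_le_add
            · exact mul_le_mul hui hyj (abs_nonneg _) hr0.le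
            · exact mul_le_mul hyi hb (abs_nonneg _) hM
        _ ≤ 3*s*M := by nlinarith
    have hnum2 : |a * b * (s^2 - r^2)| ≤ 3*M*s^3 := by
      have h1 : |a*b| ≤ s^2 := by
        calc |a*b| = |a| * |b| := abs_mul _ _
          _ ≤ s * s := mul_le_mul ha hb (abs_nonneg _) hs0.le
          _ = s^2 := by ring
      have h2 : |s^2 - r^2| ≤ 3*M*s := by
        have e : s^2 - r^2 = (s - r)*(s + r) := by ring
        rw [e, abs_mul]
        have hsum : |s + r| ≤ 3*s := by rw [abs_of_nonneg (by linarith)]; linarith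
        calc |s - r| * |s + r| ≤ M * (3*s) := mul_le_mul hsr hsum (abs_nonneg _) hM
          _ = 3*M*s := by ring
      calc |a * b * (s^2 - r^2)| = |a*b| * |s^2 - r^2| := abs_mul _ _
        _ ≤ s^2 * (3*M*s) := mul_le_mul h1 h2 (abs_nonneg _) (by positivity)
        _ = 3*M*s^3 := by ring
    have hsplit : (x - y) i * (x - y) j / r^2 - a * b / s^2
        = ((x - y) i * (x - y) j - a * b)/r^2 + a * b * (s^2 - r^2)/(r^2*s^2) := by
      field_simp; ring
    rw [hsplit]
    have t1 : |((x - y) i * (x - y) j - a * b)/r^2| ≤ 12*M/s := by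
      rw [abs_div, abs_of_pos hr2p]
      calc |(x - y) i * (x - y) j - a * b| / r^2 ≤ (3*s*M)/(s^2/4) :=
          div_le_div₀ (by positivity) hnum1 (by positivity) hr2
        _ = 12*M/s := by field_simp; ring
    have t2 : |a * b * (s^2 - r^2)/(r^2*s^2)| ≤ 12*M/s := by
      rw [abs_div, abs_of_pos (by positivity : (0:ℝ) < r^2*s^2)]
      have hden : s^2/4*s^2 ≤ r^2*s^2 := mul_le_mul_of_nonneg_right hr2 hs2.le
      calc |a * b * (s^2 - r^2)| / (r^2*s^2) ≤ (3*M*s^3)/(s^2/4*s^2) :=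
          div_le_div₀ (by positivity) hnum2 (by positivity) hden
        _ = 12*M/s := by field_simp; ring
    calc |((x - y) i * (x - y) j - a * b)/r^2 + a * b * (s^2 - r^2)/(r^2*s^2)|
        ≤ |((x - y) i * (x - y) j - a * b)/r^2| + |a * b * (s^2 - r^2)/(r^2*s^2)| := abs_add_le _ _
      _ ≤ 12*M/s + 12*M/s := add_le_add t1 t2
      _ = 24*M/s := by ring
  -- combine
  have key : stokeslet x y i j + (1/(4*π)) * (Real.log s * (if i = j then 1 else 0) - a * b / s^2)
      = (1/(4*π)) * ((Real.log s - Real.log r) * (if i = j then 1 else 0)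
        + ((x - y) i * (x - y) j / r^2 - a * b / s^2)) := by
    simp only [stokeslet, hxy_i, hxy_j]; ring
  rw [key, abs_mul, abs_of_pos (by positivity : (0:ℝ) < 1/(4*π))]
  have hinner : |(Real.log s - Real.log r) * (if i = j then 1 else 0)
      + ((x - y) i * (x - y) j / r^2 - a * b / s^2)| ≤ 26*M/s := by
    have hd : |(Real.log s - Real.log r) * (if i = j then 1 else 0)| ≤ 2*M/s := by
      rw [abs_mul]
      split_ifs with h
      · simpa using hlog
      · simp; positivity
    calc |(Real.log s - Real.log r) * (if i = j then 1 else 0)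
        + ((x - y) i * (x - y) j / r^2 - a * b / s^2)|
        ≤ |(Real.log s - Real.log r) * (if i = j then 1 else 0)|
          + |(x - y) i * (x - y) j / r^2 - a * b / s^2| := abs_add_le _ _
      _ ≤ 2*M/s + 24*M/s := add_le_add hd hrat
      _ = 26*M/s := by ring
  calc (1/(4*π)) * |(Real.log s - Real.log r) * (if i = j then 1 else 0)
      + ((x - y) i * (x - y) j / r^2 - a * b / s^2)|
      ≤ (1/(4*π)) * (26*M/s) := by
        apply mul_le_mul_of_nonneg_left hinner (by positivity)
    _ = (1/(4*π)) * (26*M) / s := by ring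


set_option maxHeartbeats 1000000 in
/-- The single layer Stokes potential with density `μ` on a smooth closed curve `γ`
satisfies `|S_γμ(x) + (1/4π)[log|x| I - R/|x|²] ∫_γ μ ds| → 0` as `|x| → ∞`,
where `R` is the matrix with entries `xᵢxⱼ`.  The curve is parametrized by the
`2π`-periodic `C¹` map `γ` with `ds = ‖γ'(t)‖dt`; `Q = ∫_γ μ ds ∈ ℝ²`, and the
claim is stated componentwise. -/
theorem stokes_single_layer_log_growth
    (γ : ℝ → E2) (hγ : ContDiff ℝ 1 γ) (hper : ∀ t, γ (t + 2*π) = γ t)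
    (μ : ℝ → E2) (hμ : Continuous μ) (hμper : ∀ t, μ (t + 2*π) = μ t)
    (Q : E2) (hQ : ∀ j, Q j = ∫ t in (0:ℝ)..(2*π), μ t j * ‖deriv γ t‖)
    (S : E2 → Fin 2 → ℝ)
    (hS : ∀ x i, S x i = ∑ j, ∫ t in (0:ℝ)..(2*π), stokeslet x (γ t) i j * μ t j * ‖deriv γ t‖) :
    ∀ i : Fin 2,
      Tendsto (fun x : E2 => S x i
          + (1/(4*π)) * (Real.log ‖x‖ * Q i - (∑ j, x i * x j * Q j) / ‖x‖ ^ 2))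
        (cocompact E2) (nhds 0) := by
  intro i
  have hπ : (0:ℝ) < π := Real.pi_pos
  have h2π : (0:ℝ) ≤ 2*π := by linarith
  have huIcc : Set.uIcc (0:ℝ) (2*π) = Set.Icc (0:ℝ) (2*π) := Set.uIcc_of_le h2π
  -- bound on the curve
  obtain ⟨M0, hM0⟩ := (isCompact_Icc : IsCompact (Set.Icc (0:ℝ) (2*π))).exists_bound_of_continuousOn
    hγ.continuous.continuousOn
  set M := max M0 0 with hMdef
  have hM : (0:ℝ) ≤ M := le_max_right _ _
  have hMγ : ∀ t ∈ Set.Icc (0:ℝ) (2*π), ‖γ t‖ ≤ M :=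
    fun t ht => (hM0 t ht).trans (le_max_left _ _)
  -- bound on the density times speed
  have hd : Continuous (fun t => ‖deriv γ t‖) := (hγ.continuous_deriv le_rfl).norm
  obtain ⟨B0, hB0⟩ := (isCompact_Icc : IsCompact (Set.Icc (0:ℝ) (2*π))).exists_bound_of_continuousOn
    (hμ.norm.mul hd).continuousOn
  set B := max B0 0 with hBdef
  have hB : (0:ℝ) ≤ B := le_max_right _ _
  have hBμ : ∀ t ∈ Set.Icc (0:ℝ) (2*π), ∀ j, |μ t j| * ‖deriv γ t‖ ≤ B := by
    intro t ht j
    have h1 : |μ t j| * ‖deriv γ t‖ ≤ ‖μ t‖ * ‖deriv γ t‖ :=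
      mul_le_mul_of_nonneg_right (abs_coord_le (μ t) j) (norm_nonneg _)
    have h2 : ‖μ t‖ * ‖deriv γ t‖ ≤ B0 := by
      have := hB0 t ht
      simp only [Pi.mul_apply] at this
      rwa [Real.norm_eq_abs, abs_of_nonneg (mul_nonneg (norm_nonneg _) (norm_nonneg _))] at this
    exact h1.trans (h2.trans (le_max_left _ _))
  have hμj : ∀ j : Fin 2, Continuous fun t => μ t j := fun j => (continuous_apply j).comp ((PiLp.continuous_ofLp ..).comp hμ)
  have hint2 : ∀ j : Fin 2, IntervalIntegrable (fun t => μ t j * ‖deriv γ t‖) volume 0 (2*π) :=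
    fun j => ((hμj j).mul hd).intervalIntegrable _ _
  -- squeeze
  apply squeeze_zero_norm' (a := fun x : E2 => (26*M*B) / ‖x‖)
  · -- eventual bound
    have hev : ∀ᶠ x : E2 in cocompact E2, 2*M + 2 ≤ ‖x‖ :=
      tendsto_norm_cocompact_atTop.eventually_ge_atTop _
    filter_upwards [hev] with x hx
    have hs0 : (0:ℝ) < ‖x‖ := by linarith
    -- nonvanishing of x - γ t on the interval
    have hne : ∀ t ∈ Set.Icc (0:ℝ) (2*π), ‖x - γ t‖ ≠ 0 := by
      intro t ht
      have h1 : ‖x‖ - ‖γ t‖ ≤ ‖x - γ t‖ := norm_sub_norm_le x (γ t)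
      have h2 := hMγ t ht
      have : (0:ℝ) < ‖x - γ t‖ := by linarith
      exact this.ne'
    -- continuity of the stokeslet kernel on the interval
    have hnorm : ContinuousOn (fun t => ‖x - γ t‖) (Set.Icc (0:ℝ) (2*π)) :=
      (continuous_const.sub hγ.continuous).norm.continuousOn
    have hcoord : ∀ k : Fin 2, Continuous fun t => γ t k :=
      fun k => (continuous_apply k).comp ((PiLp.continuous_ofLp ..).comp hγ.continuous)
    have hcont : ∀ j : Fin 2,
        ContinuousOn (fun t => stokeslet x (γ t) i j) (Set.Icc (0:ℝ) (2*π)) := by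
      intro j
      simp only [stokeslet]
      apply ContinuousOn.mul continuousOn_const
      apply ContinuousOn.add
      · exact ((hnorm.log hne).neg.mul continuousOn_const)
      · apply ContinuousOn.div
        · exact ((continuous_const.sub (hcoord i)).mul
            (continuous_const.sub (hcoord j))).continuousOn
        · exact hnorm.pow 2
        · intro t ht
          exact pow_ne_zero 2 (hne t ht)
    have hint1 : ∀ j : Fin 2, IntervalIntegrable
        (fun t => stokeslet x (γ t) i j * μ t j * ‖deriv γ t‖) volume 0 (2*π) := by
      intro j
      apply ContinuousOn.intervalIntegrable
      rw [huIcc]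
      exact ((hcont j).mul (hμj j).continuousOn).mul hd.continuousOn
    -- the constant part of the kernel
    set c : Fin 2 → ℝ := fun j =>
      (1/(4*π)) * (Real.log ‖x‖ * (if i = j then 1 else 0) - x i * x j / ‖x‖^2) with hcdef
    -- rewrite the target expression as a sum of integrals
    have hrw : S x i + (1/(4*π)) * (Real.log ‖x‖ * Q i - (∑ j, x i * x j * Q j) / ‖x‖ ^ 2)
        = ∑ j, ∫ t in (0:ℝ)..(2*π),
            (stokeslet x (γ t) i j + c j) * (μ t j * ‖deriv γ t‖) := by
      have e1 : ∀ j : Fin 2, (∫ t in (0:ℝ)..(2*π),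
          (stokeslet x (γ t) i j + c j) * (μ t j * ‖deriv γ t‖))
          = (∫ t in (0:ℝ)..(2*π), stokeslet x (γ t) i j * μ t j * ‖deriv γ t‖) + c j * Q j := by
        intro j
        rw [hQ j, ← intervalIntegral.integral_const_mul]
        rw [← intervalIntegral.integral_add (hint1 j) ((hint2 j).const_mul (c j))]
        apply intervalIntegral.integral_congr
        intro t _
        ring
      rw [hS, Finset.sum_congr rfl (fun j _ => e1 j), Finset.sum_add_distrib]
      congr 1
      simp only [hcdef]
      fin_cases i <;> simp [Fin.sum_univ_two] <;> ring
    rw [hrw]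
    -- bound each integral
    have hbound : ∀ j : Fin 2, ‖∫ t in (0:ℝ)..(2*π),
        (stokeslet x (γ t) i j + c j) * (μ t j * ‖deriv γ t‖)‖
        ≤ (1/(4*π)) * (26*M) / ‖x‖ * B * |2*π - 0| := by
      intro j
      apply intervalIntegral.norm_integral_le_of_norm_le_const
      intro t ht
      rw [Set.uIoc_of_le h2π] at ht
      have htIcc : t ∈ Set.Icc (0:ℝ) (2*π) := Set.Ioc_subset_Icc_self ht
      have hk := kern_bound hM x (γ t) (hMγ t htIcc) hx i j
      have hm : |μ t j * ‖deriv γ t‖| ≤ B := by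
        rw [abs_mul, abs_of_nonneg (norm_nonneg _)]
        exact hBμ t htIcc j
      rw [Real.norm_eq_abs, abs_mul]
      exact mul_le_mul hk hm (abs_nonneg _) (by positivity)
    calc ‖∑ j, ∫ t in (0:ℝ)..(2*π),
          (stokeslet x (γ t) i j + c j) * (μ t j * ‖deriv γ t‖)‖
        ≤ ∑ j, ‖∫ t in (0:ℝ)..(2*π),
          (stokeslet x (γ t) i j + c j) * (μ t j * ‖deriv γ t‖)‖ := norm_sum_le _ _
      _ ≤ ∑ _j : Fin 2, (1/(4*π)) * (26*M) / ‖x‖ * B * |2*π - 0| :=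
          Finset.sum_le_sum (fun j _ => hbound j)
      _ = 2 * ((1/(4*π)) * (26*M) / ‖x‖ * B * (2*π)) := by
          rw [Finset.sum_const, abs_of_nonneg (by linarith : (0:ℝ) ≤ 2*π - 0)]
          simp only [Finset.card_univ, Fintype.card_fin, smul_eq_mul, sub_zero]
          ring
      _ = 26*M*B / ‖x‖ := by field_simp; ring
  · -- the bound tends to zero
    have h1 : Tendsto (fun r : ℝ => (26*M*B) / r) atTop (nhds 0) :=
      tendsto_const_nhds.div_atTop tendsto_id
    exact h1.comp tendsto_norm_cocompact_atTop
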